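/- Let (Q, Σ) be a DFA with |Q| = n. If Alice has a winning strategy in the synchronization game on (Q, Σ) starting from a position {q, q'} consisting of two distinct states, then she can win from that position making at most n(n−1)/2 moves. -/

import Mathlib

set_option linter.unusedSectionVars false


/-- Apply a word (list of letters) to a state of a DFA with transition function `δ`. -/
def applyWord {Q A : Type*} (δ : Q → A → Q) (q : Q) : List A → Q
  | [] => q
  | a :: w => applyWord δ (δ q a) w

/-- The history (list) of letters played after `n` moves of the synchronization game,
when Alice uses strategy `σA` and Bob uses strategy `σB`; Alice moves first, i.e.
the letters at even indices are chosen by Alice and those at odd indices by Bob. -/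
def playHist {A : Type*} (σA σB : List A → A) : ℕ → List A
  | 0 => []
  | n + 1 =>
      let h := playHist σA σB n
      h ++ [if n % 2 = 0 then σA h else σB h]

/-- `w` synchronizes the position `P` (a set of states holding coins) to a single state. -/
def IsResetFrom {Q A : Type*} [DecidableEq Q] (δ : Q → A → Q) (P : Finset Q)
    (w : List A) : Prop :=
  (P.image fun q => applyWord δ q w).card = 1

/-- Alice has a winning strategy in the synchronization game starting from position `P`. -/
def AliceWins {Q A : Type*} [DecidableEq Q] (δ : Q → A → Q) (P : Finset Q) : Prop :=
  ∃ σA : List A → A, ∀ σB : List A → A, ∃ k : ℕ,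
    IsResetFrom δ P (playHist σA σB k)

/-- Alice has a strategy in the synchronization game starting from position `P` that
guarantees reaching a singleton position in a play in which Alice has chosen at most
`m` letters (after `k` letters in total, Alice has chosen `(k + 1) / 2` of them). -/
def AliceWinsWithin {Q A : Type*} [DecidableEq Q] (δ : Q → A → Q) (P : Finset Q)
    (m : ℕ) : Prop :=
  ∃ σA : List A → A, ∀ σB : List A → A, ∃ k : ℕ,
    IsResetFrom δ P (playHist σA σB k) ∧ (k + 1) / 2 ≤ m

/-- Bob has a winning strategy in the synchronization game starting from position `P`:
against every strategy of Alice the position never becomes a singleton. -/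
def BobWins {Q A : Type*} [DecidableEq Q] (δ : Q → A → Q) (P : Finset Q) : Prop :=
  ∃ σB : List A → A, ∀ σA : List A → A, ∀ k : ℕ,
    ¬ IsResetFrom δ P (playHist σA σB k)

section aux
variable {Q A : Type*} [DecidableEq Q] (δ : Q → A → Q)

/-- one step of the position dynamics -/
def dfaStep (P : Finset Q) (a : A) : Finset Q := P.image (fun q => δ q a)

/-- `Win δ m P`: Alice can force a singleton from `P` using at most `m` of her own moves. -/
def Win : ℕ → Finset Q → Prop
  | 0, P => P.card = 1
  | m + 1, P => P.card = 1 ∨ ∃ a : A,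
      (dfaStep δ P a).card = 1 ∨ ∀ b : A, Win m (dfaStep δ (dfaStep δ P a) b)

lemma win_succ (m : ℕ) (P : Finset Q) :
    Win δ (m + 1) P ↔ (P.card = 1 ∨ ∃ a : A,
      (dfaStep δ P a).card = 1 ∨ ∀ b : A, Win δ m (dfaStep δ (dfaStep δ P a) b)) := Iff.rfl

lemma win_of_card_one (m : ℕ) (P : Finset Q) (h : P.card = 1) : Win δ m P := by
  cases m with
  | zero => exact h
  | succ m => exact Or.inl h

lemma win_mono : ∀ m (P : Finset Q), Win δ m P → Win δ (m + 1) P := by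
  intro m
  induction m with
  | zero => intro P h; exact Or.inl h
  | succ m ih =>
      rintro P (h | ⟨a, h | h⟩)
      · exact Or.inl h
      · exact Or.inr ⟨a, Or.inl h⟩
      · exact Or.inr ⟨a, Or.inr fun b => ih _ (h b)⟩

lemma win_mono_le {m m' : ℕ} (h : m ≤ m') (P : Finset Q) (hw : Win δ m P) :
    Win δ m' P := by
  induction h with
  | refl => exact hw
  | step _ ih => exact win_mono δ _ _ ih

lemma applyWord_append (u v : List A) (q : Q) :
    applyWord δ q (u ++ v) = applyWord δ (applyWord δ q u) v := by
  induction u generalizing q with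
  | nil => rfl
  | cons a u ih => simp [applyWord, ih]

lemma image_applyWord_append (P : Finset Q) (h : List A) (c : A) :
    (P.image fun q => applyWord δ q (h ++ [c]))
      = dfaStep δ (P.image fun q => applyWord δ q h) c := by
  simp [dfaStep, Finset.image_image, Function.comp_def, applyWord_append, applyWord]

lemma isResetFrom_cons_cons (P : Finset Q) (a b : A) (w : List A)
    (h : IsResetFrom δ (dfaStep δ (dfaStep δ P a) b) w) : IsResetFrom δ P (a :: b :: w) := by
  simpa [IsResetFrom, dfaStep, Finset.image_image, Function.comp_def, applyWord] using h

end aux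

section main
variable {Q A : Type*} [DecidableEq Q] [Nonempty A] (δ : Q → A → Q)

lemma playHist_succ (σA σB : List A → A) (n : ℕ) :
    playHist σA σB (n + 1) =
      playHist σA σB n ++
        [if n % 2 = 0 then σA (playHist σA σB n) else σB (playHist σA σB n)] := rfl

lemma playHist_shift (a : A) (F : A → List A → A) (σB : List A → A) :
    ∀ n, playHist (fun h => match h with
        | _ :: b :: t => F b t
        | _ => a) σB (n + 2)
      = a :: σB [a] :: playHist (F (σB [a])) (fun h => σB (a :: σB [a] :: h)) n := by
  set σA' : List A → A := fun h => match h with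
    | _ :: b :: t => F b t
    | _ => a with hσA'
  intro n
  induction n with
  | zero =>
      show playHist σA' σB 2 = [a, σB [a]]
      have h1 : playHist σA' σB 1 = [a] := by simp [playHist_succ, playHist, hσA']
      rw [playHist_succ, h1]
      simp
  | succ n ih =>
      rw [playHist_succ, ih, playHist_succ]
      have hmod : (n + 2) % 2 = n % 2 := by omega
      rw [hmod]
      rcases Nat.even_or_odd n with he | ho
      · have h0 : n % 2 = 0 := Nat.even_iff.mp he
        simp [h0, hσA']
      · have h1 : n % 2 = 1 := Nat.odd_iff.mp ho
        simp [h1]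

lemma isResetFrom_nil (P : Finset Q) (h : P.card = 1) : IsResetFrom δ P [] := by
  simpa [IsResetFrom, applyWord] using h

lemma isResetFrom_single (P : Finset Q) (a : A) (h : (dfaStep δ P a).card = 1) :
    IsResetFrom δ P [a] := by
  simpa [IsResetFrom, dfaStep, applyWord] using h

lemma win_to_within : ∀ m (P : Finset Q), Win δ m P →
    ∃ σA : List A → A, ∀ σB : List A → A, ∃ k : ℕ,
      IsResetFrom δ P (playHist σA σB k) ∧ (k + 1) / 2 ≤ m := by
  intro m
  induction m with
  | zero =>
      intro P h
      exact ⟨fun _ => Classical.arbitrary A, fun σB =>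
        ⟨0, isResetFrom_nil δ P h, by norm_num⟩⟩
  | succ m ih =>
      rintro P (h | ⟨a, h | h⟩)
      · exact ⟨fun _ => Classical.arbitrary A, fun σB =>
          ⟨0, isResetFrom_nil δ P h, by norm_num⟩⟩
      · refine ⟨fun _ => a, fun σB => ⟨1, ?_, by norm_num⟩⟩
        have : playHist (fun _ => a) σB 1 = [a] := by simp [playHist_succ, playHist]
        rw [this]
        exact isResetFrom_single δ P a h
      · choose F hF using fun b => ih _ (h b)
        refine ⟨fun h => match h with
          | _ :: b :: t => F b t
          | _ => a, fun σB => ?_⟩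
        set b := σB [a] with hb
        obtain ⟨k, hk1, hk2⟩ := hF b (fun h => σB (a :: b :: h))
        refine ⟨k + 2, ?_, by omega⟩
        rw [playHist_shift a F σB k]
        exact isResetFrom_cons_cons δ P a b _ hk1

end main

section stab
variable {Q A : Type*} [Fintype Q] [DecidableEq Q] [Nonempty A] (δ : Q → A → Q)

open Classical in
lemma exists_stable :
    ∃ m ≤ Fintype.card Q * (Fintype.card Q - 1) / 2,
      ∀ P : Finset Q, P.card = 2 → Win δ (m + 1) P → Win δ m P := by
  classical
  set D := Fintype.card Q * (Fintype.card Q - 1) / 2 with hD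
  by_contra hcon
  push_neg at hcon
  set S : ℕ → Finset (Finset Q) :=
    fun m => Finset.univ.filter (fun P => P.card = 2 ∧ Win δ m P) with hS
  have hmono : ∀ m, S m ⊆ S (m + 1) := by
    intro m P hP
    simp only [hS, Finset.mem_filter] at hP ⊢
    exact ⟨hP.1, hP.2.1, win_mono δ m P hP.2.2⟩
  have hbound : ∀ m, (S m).card ≤ D := by
    intro m
    have hsub : S m ⊆ Finset.univ.powersetCard 2 := by
      intro P hP
      simp only [hS, Finset.mem_filter] at hP
      rw [Finset.mem_powersetCard]
      exact ⟨Finset.subset_univ P, hP.2.1⟩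
    calc (S m).card ≤ (Finset.univ.powersetCard 2).card := Finset.card_le_card hsub
      _ = (Fintype.card Q).choose 2 := by
          rw [Finset.card_powersetCard, Finset.card_univ]
      _ = D := Nat.choose_two_right _
  have hstrict : ∀ m ≤ D, (S m).card < (S (m + 1)).card := by
    intro m hm
    obtain ⟨P, hP2, hPw, hPnw⟩ := hcon m hm
    have hPin : P ∈ S (m + 1) := by
      simp only [hS, Finset.mem_filter]
      exact ⟨Finset.mem_univ _, hP2, hPw⟩
    have hPout : P ∉ S m := by
      simp only [hS, Finset.mem_filter]
      tauto
    exact Finset.card_lt_card ⟨hmono m, fun hsub => hPout (hsub hPin)⟩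
  have hgrow : ∀ m, m ≤ D + 1 → m ≤ (S m).card := by
    intro m
    induction m with
    | zero => intro; exact Nat.zero_le _
    | succ m ih =>
        intro hm
        have h1 := ih (by omega)
        have h2 := hstrict m (by omega)
        omega
  have := hgrow (D + 1) le_rfl
  have := hbound (D + 1)
  omega

end stab

section bob
variable {Q A : Type*} [DecidableEq Q] [Nonempty A] (δ : Q → A → Q)

lemma bob_strategy (m : ℕ)
    (hstab : ∀ P : Finset Q, P.card = 2 → Win δ (m + 1) P → Win δ m P)
    (P : Finset Q) (hP : P.card = 2) (hnw : ¬ Win δ m P) :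
    ∃ σB : List A → A, ∀ (σA : List A → A) (k : ℕ),
      ¬ IsResetFrom δ P (playHist σA σB k) := by
  classical
  set pos : List A → Finset Q := fun h => P.image (fun q => applyWord δ q h) with hpos
  have hpos_nil : pos [] = P := by simp [hpos, applyWord]
  have hpos_app : ∀ (h : List A) (c : A), pos (h ++ [c]) = dfaStep δ (pos h) c :=
    fun h c => image_applyWord_append δ P h c
  have hcard_le : ∀ h, (pos h).card ≤ 2 := fun h => le_trans Finset.card_image_le hP.le
  have hne : ∀ h, (pos h).Nonempty := by
    intro h
    apply Finset.Nonempty.image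
    rw [← Finset.card_pos, hP]; norm_num
  have hcard2 : ∀ h, ¬ Win δ m (pos h) → (pos h).card = 2 := by
    intro h hw
    have h1 : (pos h).card ≠ 1 := fun hc => hw (win_of_card_one δ m _ hc)
    have h2 := hcard_le h
    have h3 : 0 < (pos h).card := Finset.card_pos.mpr (hne h)
    omega
  have hkey : ∀ h, ¬ Win δ m (pos h) → ∀ a : A,
      (dfaStep δ (pos h) a).card ≠ 1 ∧
        ∃ b : A, ¬ Win δ m (dfaStep δ (dfaStep δ (pos h) a) b) := by
    intro h hw a
    have hs : ¬ Win δ (m + 1) (pos h) := fun hw1 => hw (hstab _ (hcard2 h hw) hw1)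
    rw [win_succ] at hs
    push_neg at hs
    exact hs.2 a
  set σB : List A → A := fun h =>
    if hc : ∃ b : A, ¬ Win δ m (pos (h ++ [b])) then hc.choose
    else Classical.arbitrary A with hσB
  refine ⟨σB, fun σA => ?_⟩
  have hinv : ∀ j, ¬ Win δ m (pos (playHist σA σB (2 * j))) := by
    intro j
    induction j with
    | zero => simpa [playHist, hpos_nil] using hnw
    | succ j ih =>
        have h2 : 2 * (j + 1) = (2 * j + 1) + 1 := by ring
        have hmod0 : (2 * j) % 2 = 0 := by omega
        set h2j := playHist σA σB (2 * j) with hh2j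
        have e1 : playHist σA σB (2 * j + 1) = h2j ++ [σA h2j] := by
          rw [playHist_succ, hmod0]; simp [hh2j]
        have hex : ∃ b : A, ¬ Win δ m (pos ((h2j ++ [σA h2j]) ++ [b])) := by
          obtain ⟨_, b, hb⟩ := hkey _ ih (σA h2j)
          refine ⟨b, ?_⟩
          rw [hpos_app, hpos_app]
          exact hb
        have e2 : σB (h2j ++ [σA h2j]) = hex.choose := by
          rw [hσB]; exact dif_pos hex
        have e3 : playHist σA σB (2 * (j + 1))
            = (h2j ++ [σA h2j]) ++ [σB (h2j ++ [σA h2j])] := by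
          rw [h2, playHist_succ, e1]
          have : (2 * j + 1) % 2 = 1 := by omega
          rw [this]
          simp
        rw [e3, e2]
        exact hex.choose_spec
  intro k
  rcases Nat.even_or_odd k with ⟨j, hj⟩ | ⟨j, hj⟩
  · intro hr
    have hc1 : (pos (playHist σA σB k)).card = 1 := by
      simpa [IsResetFrom, hpos] using hr
    have : k = 2 * j := by omega
    rw [this] at hc1
    have := hcard2 _ (hinv j)
    omega
  · intro hr
    have hc1 : (pos (playHist σA σB k)).card = 1 := by
      simpa [IsResetFrom, hpos] using hr
    set h2j := playHist σA σB (2 * j) with hh2j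
    have hmod0 : (2 * j) % 2 = 0 := by omega
    have e1 : playHist σA σB (2 * j + 1) = h2j ++ [σA h2j] := by
      rw [playHist_succ, hmod0]; simp [hh2j]
    have hk : k = 2 * j + 1 := by omega
    rw [hk, e1, hpos_app] at hc1
    exact (hkey _ (hinv j) (σA h2j)).1 hc1

end bob

/-- If Alice has a winning strategy in the synchronization game starting from a position
`{q, q'}` consisting of two distinct states of an `n`-state DFA, she can win from that
position making at most `n(n-1)/2` moves. -/
theorem alice_wins_within_on_pair {Q A : Type*} [Fintype Q] [DecidableEq Q] [Nonempty A]
    (δ : Q → A → Q) (q q' : Q) (hqq : q ≠ q')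
    (h : AliceWins δ {q, q'}) :
    AliceWinsWithin δ {q, q'} (Fintype.card Q * (Fintype.card Q - 1) / 2) := by
  classical
  obtain ⟨m, hmD, hstab⟩ := exists_stable δ
  have hP2 : ({q, q'} : Finset Q).card = 2 := Finset.card_pair hqq
  have hwin : Win δ m ({q, q'} : Finset Q) := by
    by_contra hnw
    obtain ⟨σB, hσB⟩ := bob_strategy δ m hstab _ hP2 hnw
    obtain ⟨σA, hσA⟩ := h
    obtain ⟨k, hk⟩ := hσA σB
    exact hσB σA k hk
  exact win_to_within δ _ _ (win_mono_le δ hmD _ hwin)
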